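/- Let R₁ and R₂ be unambiguous regexes over Σ and suppose there exist words b, d, e, g such that c := d ++ e is nonempty, b ++ c^i ++ d ∈ L(R₁) for every i ∈ ℕ, and e ++ c^j ++ g ∈ L(R₂) for every j ∈ ℕ. Then the concatenation R₁·R₂ is infinitely ambiguous. (The ⟸ direction of the paper's Theorem 2(a), stated separately at the word level.) -/

import Mathlib

/-! Shared definitions: words, word power, parse trees of regular expressions,
(un)ambiguity, finite/infinite ambiguity, and the Brabrand–Thomsen overlap. -/

universe u

variable {α : Type u}

/-- `wpow w n` is the `n`-fold concatenation `w^n` of the word `w` with itself. -/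
def wpow (w : List α) : ℕ → List α
  | 0 => []
  | n + 1 => w ++ wpow w n

/-- Parse trees of a regular expression for a word, defined inductively:
the regex `ε` has a unique parse tree for the empty word; the character regex
for `a` has a unique parse tree for the word `[a]`; a parse tree of `R₁ + R₂`
(alternation) for `w` is a parse tree of `R₁` for `w` or a parse tree of `R₂`
for `w` (the two sides distinct); a parse tree of `R₁ * R₂` (concatenation)
for `w` is a decomposition `w = u ++ v` with parse trees of `R₁` for `u` and
of `R₂` for `v`; a parse tree of `R*` for `w` is a finite list of words
(possibly empty entries) concatenating to `w` with a parse tree of `R` for each. -/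
inductive ParseTree : RegularExpression α → List α → Type u where
  | eps : ParseTree RegularExpression.epsilon []
  | char (a : α) : ParseTree (RegularExpression.char a) [a]
  | plusLeft {R₁ R₂ : RegularExpression α} {w : List α} :
      ParseTree R₁ w → ParseTree (R₁ + R₂) w
  | plusRight {R₁ R₂ : RegularExpression α} {w : List α} :
      ParseTree R₂ w → ParseTree (R₁ + R₂) w
  | comp {R₁ R₂ : RegularExpression α} {u v : List α} :
      ParseTree R₁ u → ParseTree R₂ v → ParseTree (R₁ * R₂) (u ++ v)
  | starNil {R : RegularExpression α} : ParseTree R.star []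
  | starCons {R : RegularExpression α} {u v : List α} :
      ParseTree R u → ParseTree R.star v → ParseTree R.star (u ++ v)

/-- A regex is unambiguous if every word has at most one parse tree of it. -/
def Unambiguous (R : RegularExpression α) : Prop :=
  ∀ (w : List α) (t₁ t₂ : ParseTree R w), t₁ = t₂

/-- A regex is ambiguous if some word has two distinct parse trees of it. -/
def Ambiguous (R : RegularExpression α) : Prop :=
  ∃ (w : List α) (t₁ t₂ : ParseTree R w), t₁ ≠ t₂

/-- The word `w` has at least `k` distinct parse trees of `R`. -/
def HasAtLeastTrees (R : RegularExpression α) (w : List α) (k : ℕ) : Prop :=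
  ∃ l : List (ParseTree R w), l.Nodup ∧ k ≤ l.length

/-- Every word has at most `k` parse trees of `R`. -/
def BoundedBy (R : RegularExpression α) (k : ℕ) : Prop :=
  ∀ (w : List α) (l : List (ParseTree R w)), l.Nodup → l.length ≤ k

/-- `R` is finitely ambiguous: ambiguous, with a uniform bound on the number
of parse trees of any word. -/
def FinitelyAmbiguous (R : RegularExpression α) : Prop :=
  Ambiguous R ∧ ∃ k : ℕ, BoundedBy R k

/-- `R` is infinitely ambiguous: for every `k` some word has more than `k`
parse trees of `R`. -/
def InfinitelyAmbiguous (R : RegularExpression α) : Prop :=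
  ∀ k : ℕ, ∃ w : List α, HasAtLeastTrees R w (k + 1)

/-- Languages `L₁` and `L₂` overlap (nonemptiness of the Brabrand–Thomsen
overlap operator): there are words `x`, `y` and a nonempty word `a` with
`x ∈ L₁`, `x ++ a ∈ L₁`, `a ++ y ∈ L₂`, and `y ∈ L₂`. -/
def Overlaps (L₁ L₂ : Language α) : Prop :=
  ∃ x y a : List α, a ≠ [] ∧ x ∈ L₁ ∧ x ++ a ∈ L₁ ∧ a ++ y ∈ L₂ ∧ y ∈ L₂


theorem wpow_add (c : List α) (m n : ℕ) : wpow c (m + n) = wpow c m ++ wpow c n := by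
  induction m with
  | zero => simp [wpow]
  | succ m ih =>
    have : m + 1 + n = (m + n) + 1 := by omega
    rw [this]
    simp [wpow, ih]

theorem wpow_length (c : List α) (n : ℕ) : (wpow c n).length = n * c.length := by
  induction n with
  | zero => simp [wpow]
  | succ n ih => simp [wpow, ih]; ring

theorem existsTree : ∀ (R : RegularExpression α) (w : List α),
    w ∈ R.matches' → Nonempty (ParseTree R w) := by
  intro R
  induction R with
  | zero => intro w hw; simp [RegularExpression.matches'] at hw
  | epsilon =>
    intro w hw
    simp [RegularExpression.matches', Language.mem_one] at hw
    subst hw; exact ⟨ParseTree.eps⟩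
  | char a =>
    intro w hw
    simp [RegularExpression.matches'] at hw
    subst hw; exact ⟨ParseTree.char a⟩
  | plus P Q ihP ihQ =>
    intro w hw
    rcases hw with h | h
    · exact ⟨ParseTree.plusLeft (ihP w h).some⟩
    · exact ⟨ParseTree.plusRight (ihQ w h).some⟩
  | comp P Q ihP ihQ =>
    intro w hw
    rcases hw with ⟨u, hu, v, hv, rfl⟩
    exact ⟨ParseTree.comp (ihP u hu).some (ihQ v hv).some⟩
  | star P ih =>
    intro w hw
    rw [RegularExpression.matches'_star, Language.mem_kstar] at hw
    rcases hw with ⟨L, rfl, hL⟩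
    induction L with
    | nil => exact ⟨ParseTree.starNil⟩
    | cons y L ihL =>
      have h1 : y ∈ P.matches' := hL y (by simp)
      have h2 := ihL (fun z hz => hL z (by simp [hz]))
      exact ⟨ParseTree.starCons (ih y h1).some h2.some⟩

def leftLen : {R : RegularExpression α} → {w : List α} → ParseTree R w → ℕ
  | _, _, ParseTree.comp (u := u) _ _ => u.length
  | _, _, _ => 0

theorem leftLen_cast {R : RegularExpression α} {w w' : List α} (h : w = w')
    (t : ParseTree R w) : leftLen (h ▸ t) = leftLen t := by
  subst h; rfl

/-- ⟸ direction of Theorem 2(a): for unambiguous `R₁`, `R₂`, if there are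
words `b d e g` with `c := d ++ e` nonempty, `b ++ c^i ++ d ∈ L(R₁)` for all
`i`, and `e ++ c^j ++ g ∈ L(R₂)` for all `j`, then `R₁·R₂` is infinitely
ambiguous. -/
theorem stmt_17 {α : Type u} (R₁ R₂ : RegularExpression α)
    (h₁ : Unambiguous R₁) (h₂ : Unambiguous R₂)
    (b d e g : List α) (hc : d ++ e ≠ [])
    (hR₁ : ∀ i : ℕ, b ++ wpow (d ++ e) i ++ d ∈ R₁.matches')
    (hR₂ : ∀ j : ℕ, e ++ wpow (d ++ e) j ++ g ∈ R₂.matches') :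
    InfinitelyAmbiguous (R₁ * R₂) := by
  intro k
  set c := d ++ e with hcdef
  refine ⟨b ++ wpow c (k + 1) ++ g, ?_⟩
  have hclen : 0 < c.length := by
    cases hcl : c with
    | nil => exact absurd hcl hc
    | cons x xs => simp
  have hW : ∀ i, i ≤ k →
      (b ++ wpow c i ++ d) ++ (e ++ wpow c (k - i) ++ g)
        = b ++ wpow c (k + 1) ++ g := by
    intro i hi
    have h1 : k + 1 = i + (k - i + 1) := by omega
    rw [h1, wpow_add]
    have h2 : wpow c (k - i + 1) = c ++ wpow c (k - i) := rfl
    rw [h2, hcdef]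
    simp [List.append_assoc]
  let f : (i : ℕ) → i ∈ List.range (k + 1) → ParseTree (R₁ * R₂) (b ++ wpow c (k + 1) ++ g) :=
    fun i hi =>
      (hW i (by simpa [Nat.lt_succ_iff] using List.mem_range.mp hi)) ▸
        ParseTree.comp (existsTree R₁ _ (hR₁ i)).some (existsTree R₂ _ (hR₂ (k - i))).some
  have hlen : ∀ i hi, leftLen (f i hi) = b.length + i * c.length + d.length := by
    intro i hi
    unfold f
    rw [leftLen_cast]
    show (b ++ wpow c i ++ d).length = _
    simp [wpow_length]
    omega
  refine ⟨(List.range (k + 1)).pmap f (fun _ h => h), ?_, by simp⟩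
  refine List.Nodup.pmap ?_ (List.nodup_range (n := k + 1))
  intro i hi j hj hij
  have := congrArg leftLen hij
  rw [hlen i hi, hlen j hj] at this
  have : i * c.length = j * c.length := by omega
  exact Nat.eq_of_mul_eq_mul_right hclen this
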